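/- Let n, p, q, r be nonnegative integers with p, q, r ≤ n, and let α, β, γ be nonnegative integers with pα + qβ + rγ ≤ n. Then Σ (-1)^{s+t+u} C(s,i)C(α,s) C(t,j)C(β,t) C(u,k)C(γ,u), summed over all nonnegative (s,t,u) with ps + qt + ru ≤ n, equals (-1)^{i+j+k} if (α,β,γ) = (i,j,k), and 0 otherwise. -/

import Mathlib

open Finset

lemma key1 (α i : ℕ) :
    ∑ s ∈ Finset.range (α + 1), (-1 : ℤ) ^ s * (s.choose i) * (α.choose s) =
      if α = i then (-1 : ℤ) ^ i else 0 := by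
  by_cases hi : i ≤ α
  · have h1 : ∑ s ∈ Finset.range (α + 1), (-1 : ℤ) ^ s * (s.choose i) * (α.choose s)
        = ∑ s ∈ Finset.Ico i (α + 1), (-1 : ℤ) ^ s * (s.choose i) * (α.choose s) := by
      refine (Finset.sum_subset ?_ ?_).symm
      · intro x hx; simp only [Finset.mem_Ico, Finset.mem_range] at *; omega
      · intro x hx hx'
        simp only [Finset.mem_Ico, Finset.mem_range] at hx hx'
        have : x < i := by omega
        simp [Nat.choose_eq_zero_of_lt this]
    rw [h1, Finset.sum_Ico_eq_sum_range]
    have h2 : α + 1 - i = (α - i) + 1 := by omega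
    rw [h2]
    have h3 : ∀ m ∈ Finset.range (α - i + 1),
        (-1 : ℤ) ^ (i + m) * ((i + m).choose i) * (α.choose (i + m))
          = ((-1 : ℤ) ^ i * (α.choose i)) * ((-1 : ℤ) ^ m * ((α - i).choose m)) := by
      intro m hm
      simp only [Finset.mem_range] at hm
      have hle : i + m ≤ α := by omega
      have := Nat.choose_mul (n := α) (Nat.le_add_right i m)
      rw [Nat.add_sub_cancel_left] at this
      have hcast : ((i + m).choose i : ℤ) * (α.choose (i + m)) =
          (α.choose i : ℤ) * ((α - i).choose m) := by
        exact_mod_cast congrArg (Nat.cast : ℕ → ℤ) (by linarith [this] : (i+m).choose i * α.choose (i+m) = α.choose i * (α - i).choose m)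
      rw [pow_add]; linear_combination ((-1:ℤ)^i * (-1)^m) * hcast
    rw [Finset.sum_congr rfl h3, ← Finset.mul_sum, Int.alternating_sum_range_choose]
    by_cases hαi : α = i
    · subst hαi; simp
    · have : α - i ≠ 0 := by omega
      simp [this, hαi]
  · have hz : ∀ s ∈ Finset.range (α + 1), (-1 : ℤ) ^ s * (s.choose i) * (α.choose s) = 0 := by
      intro s hs; simp only [Finset.mem_range] at hs
      have : s < i := by omega
      simp [Nat.choose_eq_zero_of_lt this]
    rw [Finset.sum_congr rfl hz]
    have : α ≠ i := by omega
    simp [this]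

lemma finsum_bdd (f : ℕ → ℤ) (N : ℕ) (h : ∀ m, N < m → f m = 0) :
    ∑ᶠ m, f m = ∑ m ∈ Finset.range (N + 1), f m := by
  apply finsum_eq_finset_sum_of_support_subset
  intro x hx
  simp only [Function.mem_support] at hx
  simp only [Finset.coe_range, Set.mem_Iio]
  by_contra hc
  exact hx (h x (by omega))


lemma finsum_const_mul_bdd (c : ℤ) (f : ℕ → ℤ) (N : ℕ) (h : ∀ m, N < m → f m = 0) :
    ∑ᶠ m, c * f m = c * ∑ᶠ m, f m := by
  rw [finsum_bdd f N h, finsum_bdd (fun m => c * f m) N (fun m hm => by simp [h m hm]),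
    Finset.mul_sum]

theorem stmt16 (n p q r i j k α β γ : ℕ) (hp : p ≤ n) (hq : q ≤ n) (hr : r ≤ n)
    (h : p * α + q * β + r * γ ≤ n) :
    (∑ᶠ (s : ℕ) (t : ℕ) (u : ℕ),
        if p * s + q * t + r * u ≤ n then
          (-1 : ℤ) ^ (s + t + u) * (s.choose i) * (α.choose s) * (t.choose j) *
            (β.choose t) * (u.choose k) * (γ.choose u)
        else 0) =
      if (α, β, γ) = (i, j, k) then (-1 : ℤ) ^ (i + j + k) else 0 := by
  set A : ℕ → ℤ := fun s => (-1 : ℤ) ^ s * (s.choose i) * (α.choose s) with hA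
  set B : ℕ → ℤ := fun t => (-1 : ℤ) ^ t * (t.choose j) * (β.choose t) with hB
  set C : ℕ → ℤ := fun u => (-1 : ℤ) ^ u * (u.choose k) * (γ.choose u) with hC
  have hterm : ∀ s t u : ℕ,
      (if p * s + q * t + r * u ≤ n then
          (-1 : ℤ) ^ (s + t + u) * (s.choose i) * (α.choose s) * (t.choose j) *
            (β.choose t) * (u.choose k) * (γ.choose u)
        else 0) = A s * B t * C u := by
    intro s t u
    by_cases hc : p * s + q * t + r * u ≤ n
    · rw [if_pos hc, hA, hB, hC]
      simp only [pow_add]; ring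
    · rw [if_neg hc]
      have : α < s ∨ β < t ∨ γ < u := by
        by_contra hcon
        push_neg at hcon
        obtain ⟨h1, h2, h3⟩ := hcon
        have e1 : p * s ≤ p * α := Nat.mul_le_mul_left p h1
        have e2 : q * t ≤ q * β := Nat.mul_le_mul_left q h2
        have e3 : r * u ≤ r * γ := Nat.mul_le_mul_left r h3
        omega
      rcases this with h1 | h1 | h1
      · rw [hA]; simp [Nat.choose_eq_zero_of_lt h1]
      · rw [hB]; simp [Nat.choose_eq_zero_of_lt h1]
      · rw [hC]; simp [Nat.choose_eq_zero_of_lt h1]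
  have hAbd : ∀ s, α < s → A s = 0 := by
    intro s hs; rw [hA]; simp [Nat.choose_eq_zero_of_lt hs]
  have hBbd : ∀ t, β < t → B t = 0 := by
    intro t ht; rw [hB]; simp [Nat.choose_eq_zero_of_lt ht]
  have hCbd : ∀ u, γ < u → C u = 0 := by
    intro u hu; rw [hC]; simp [Nat.choose_eq_zero_of_lt hu]
  have hCsum : ∑ᶠ u, C u = (if γ = k then (-1 : ℤ) ^ k else 0) := by
    rw [finsum_bdd C γ hCbd]; exact key1 γ k
  have hBsum : ∑ᶠ t, B t = (if β = j then (-1 : ℤ) ^ j else 0) := by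
    rw [finsum_bdd B β hBbd]; exact key1 β j
  have hAsum : ∑ᶠ s, A s = (if α = i then (-1 : ℤ) ^ i else 0) := by
    rw [finsum_bdd A α hAbd]; exact key1 α i
  have step1 : ∀ s t : ℕ,
      (∑ᶠ u, (if p * s + q * t + r * u ≤ n then
          (-1 : ℤ) ^ (s + t + u) * (s.choose i) * (α.choose s) * (t.choose j) *
            (β.choose t) * (u.choose k) * (γ.choose u)
        else 0)) = A s * B t * (if γ = k then (-1 : ℤ) ^ k else 0) := by
    intro s t
    have : (∑ᶠ u, (if p * s + q * t + r * u ≤ n then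
          (-1 : ℤ) ^ (s + t + u) * (s.choose i) * (α.choose s) * (t.choose j) *
            (β.choose t) * (u.choose k) * (γ.choose u)
        else 0)) = ∑ᶠ u, A s * B t * C u := by
      exact finsum_congr (fun u => hterm s t u)
    rw [this, finsum_const_mul_bdd (A s * B t) C γ hCbd, hCsum]
  have step2 : ∀ s : ℕ,
      (∑ᶠ (t : ℕ) (u : ℕ), (if p * s + q * t + r * u ≤ n then
          (-1 : ℤ) ^ (s + t + u) * (s.choose i) * (α.choose s) * (t.choose j) *
            (β.choose t) * (u.choose k) * (γ.choose u)
        else 0)) = A s * (if β = j then (-1 : ℤ) ^ j else 0) *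
          (if γ = k then (-1 : ℤ) ^ k else 0) := by
    intro s
    have e : (∑ᶠ (t : ℕ) (u : ℕ), (if p * s + q * t + r * u ≤ n then
          (-1 : ℤ) ^ (s + t + u) * (s.choose i) * (α.choose s) * (t.choose j) *
            (β.choose t) * (u.choose k) * (γ.choose u)
        else 0)) = ∑ᶠ t, (A s * (if γ = k then (-1 : ℤ) ^ k else 0)) * B t := by
      refine finsum_congr fun t => ?_
      rw [step1 s t]; ring
    rw [e, finsum_const_mul_bdd _ B β hBbd, hBsum]; ring
  have step3 : (∑ᶠ (s : ℕ) (t : ℕ) (u : ℕ), (if p * s + q * t + r * u ≤ n then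
          (-1 : ℤ) ^ (s + t + u) * (s.choose i) * (α.choose s) * (t.choose j) *
            (β.choose t) * (u.choose k) * (γ.choose u)
        else 0)) = (if α = i then (-1 : ℤ) ^ i else 0) *
          (if β = j then (-1 : ℤ) ^ j else 0) * (if γ = k then (-1 : ℤ) ^ k else 0) := by
    have e : (∑ᶠ (s : ℕ) (t : ℕ) (u : ℕ), (if p * s + q * t + r * u ≤ n then
          (-1 : ℤ) ^ (s + t + u) * (s.choose i) * (α.choose s) * (t.choose j) *
            (β.choose t) * (u.choose k) * (γ.choose u)
        else 0)) = ∑ᶠ s, ((if β = j then (-1 : ℤ) ^ j else 0) *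
          (if γ = k then (-1 : ℤ) ^ k else 0)) * A s := by
      refine finsum_congr fun s => ?_
      rw [step2 s]; ring
    rw [e, finsum_const_mul_bdd _ A α hAbd, hAsum]; ring
  rw [step3]
  by_cases h1 : α = i <;> by_cases h2 : β = j <;> by_cases h3 : γ = k <;>
    simp [h1, h2, h3, Prod.ext_iff, pow_add]
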